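/- Let q = k = 2 and let f : [2]² → {0,1} be the Max-DICUT predicate, f(x,y) = 1 iff x = 2 and y = 1. Then for all γ,β ∈ [0,1], K_γ^Y({f}) ∩ K_β^N({f}) ≠ ∅ if and only if one of the following holds: (a) γ ≤ 1/2 and β ≥ 1/4; (b) 1/2 ≤ γ ≤ 2/3 and β ≥ (1−γ)²/(3−4γ); (c) 2/3 ≤ γ ≤ 1 and β ≥ 2γ−1. -/

import Mathlib

open scoped Classical

/-- `D` is a probability distribution on the finite type `Ω`. -/
def IsDist {Ω : Type*} [Fintype Ω] (D : Ω → ℝ) : Prop :=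
  (∀ x, 0 ≤ D x) ∧ ∑ x, D x = 1

/-- The Max-DICUT predicate on the alphabet `[2] = {1,2}` (encoded as `Fin 2 = {0,1}`
with `1 ↦ 0` and `2 ↦ 1`): `f(x,y) = 1` iff `x = 2` and `y = 1`. -/
def dicut : (Fin 2 → Fin 2) → Bool :=
  fun a => decide (a 0 = 1 ∧ a 1 = 0)

/-- The value `C(f,a)(b)` of the constraint `a` on the assignment `b = (b_{i,σ})`. -/
def cVal (a : Fin 2 → Fin 2) (b : Fin 2 → Fin 2 → Fin 2) : ℝ :=
  if dicut (fun i => b i (a i)) then 1 else 0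

/-- The planted assignment `𝕀` with `𝕀_{i,σ} = σ`. -/
def planted : Fin 2 → Fin 2 → Fin 2 := fun _ σ => σ

/-- The set `S_γ^Y({f})` of YES distributions for Max-DICUT. -/
noncomputable def SYd (γ : ℝ) : Set ((Fin 2 → Fin 2) → ℝ) :=
  {D | IsDist D ∧ γ ≤ ∑ a : Fin 2 → Fin 2, D a * cVal a planted}

/-- The set `S_β^N({f})` of NO distributions for Max-DICUT. -/
noncomputable def SNd (β : ℝ) : Set ((Fin 2 → Fin 2) → ℝ) :=
  {D | IsDist D ∧ ∀ P : Fin 2 → Fin 2 → ℝ, (∀ σ, IsDist (P σ)) →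
    (∑ a : Fin 2 → Fin 2, D a *
      ∑ b : Fin 2 → Fin 2 → Fin 2, (∏ i, ∏ σ, P σ (b i σ)) * cVal a b) ≤ β}

/-- The marginal vector `μ(D)` of a distribution `D` on `[2]²`. -/
noncomputable def marg (D : (Fin 2 → Fin 2) → ℝ) : Fin 2 × Fin 2 → ℝ :=
  fun x => ∑ a : Fin 2 → Fin 2, if a x.1 = x.2 then D a else 0

/-- `K_γ^Y({f})` for Max-DICUT. -/
noncomputable def KYd (γ : ℝ) : Set (Fin 2 × Fin 2 → ℝ) := marg '' SYd γ

/-- `K_β^N({f})` for Max-DICUT. -/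
noncomputable def KNd (β : ℝ) : Set (Fin 2 × Fin 2 → ℝ) := marg '' SNd β

-- auxiliary lemmas
lemma sum_pi2 {M : Type*} [AddCommMonoid M] {α : Type*} [Fintype α] (g : (Fin 2 → α) → M) :
    ∑ f, g f = ∑ x, ∑ y, g ![x, y] := by
  rw [← Equiv.sum_comp (finTwoArrowEquiv α).symm g, Fintype.sum_prod_type]
  rfl

lemma sum_a (g : (Fin 2 → Fin 2) → ℝ) :
    ∑ a, g a = g ![0,0] + g ![0,1] + g ![1,0] + g ![1,1] := by
  rw [sum_pi2, Fin.sum_univ_two, Fin.sum_univ_two, Fin.sum_univ_two]; ring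

lemma fin2cases (v : Fin 2) : v = 0 ∨ v = 1 := by omega

lemma inner_eval (P : Fin 2 → Fin 2 → ℝ) (h0 : P 0 0 + P 0 1 = 1) (h1 : P 1 0 + P 1 1 = 1)
    (a : Fin 2 → Fin 2) :
    ∑ b : Fin 2 → Fin 2 → Fin 2, (∏ i, ∏ σ, P σ (b i σ)) * cVal a b
      = P (a 0) 1 * P (a 1) 0 := by
  rw [sum_pi2]
  simp only [sum_pi2 (α := Fin 2)]
  simp only [Fin.sum_univ_two, Fin.prod_univ_two, cVal, dicut, Matrix.cons_val_zero,
    Matrix.cons_val_one, Matrix.head_cons]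
  rcases fin2cases (a 0) with h|h <;> rcases fin2cases (a 1) with h'|h' <;>
    simp only [h, h', Matrix.cons_val_zero, Matrix.cons_val_one, Matrix.head_cons] <;>
    norm_num
  · linear_combination (P 0 1 * P 0 0 * (P 1 0 + P 1 1 + 1)) * h1
  · linear_combination (P 0 1 * P 1 0 * (P 1 0 + P 1 1)) * h0 + (P 0 1 * P 1 0) * h1
  · linear_combination (P 1 1 * P 0 0 * (P 1 0 + P 1 1)) * h0 + (P 1 1 * P 0 0) * h1
  · linear_combination (P 1 1 * P 1 0 * (P 0 0 + P 0 1 + 1)) * h0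

lemma val_no (D : (Fin 2 → Fin 2) → ℝ) (P : Fin 2 → Fin 2 → ℝ)
    (h0 : P 0 0 + P 0 1 = 1) (h1 : P 1 0 + P 1 1 = 1) :
    (∑ a : Fin 2 → Fin 2, D a *
      ∑ b : Fin 2 → Fin 2 → Fin 2, (∏ i, ∏ σ, P σ (b i σ)) * cVal a b)
    = D ![0,0] * (P 0 1 * P 0 0) + D ![0,1] * (P 0 1 * P 1 0)
      + D ![1,0] * (P 1 1 * P 0 0) + D ![1,1] * (P 1 1 * P 1 0) := by
  simp_rw [inner_eval P h0 h1]
  rw [sum_a (fun a => D a * (P (a 0) 1 * P (a 1) 0))]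
  norm_num

lemma val_yes (D : (Fin 2 → Fin 2) → ℝ) :
    ∑ a : Fin 2 → Fin 2, D a * cVal a planted = D ![1,0] := by
  rw [sum_a (fun a => D a * cVal a planted)]
  norm_num [cVal, planted, dicut]

lemma marg00 (D : (Fin 2 → Fin 2) → ℝ) : marg D (0, 0) = D ![0,0] + D ![0,1] := by
  simp only [marg]
  rw [sum_a (fun a => if a (0,(0:Fin 2)).1 = (0,(0:Fin 2)).2 then D a else 0)]
  norm_num

lemma marg01 (D : (Fin 2 → Fin 2) → ℝ) : marg D (0, 1) = D ![1,0] + D ![1,1] := by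
  simp only [marg]
  rw [sum_a (fun a => if a ((0:Fin 2),(1:Fin 2)).1 = ((0:Fin 2),(1:Fin 2)).2 then D a else 0)]
  norm_num

lemma marg10 (D : (Fin 2 → Fin 2) → ℝ) : marg D (1, 0) = D ![0,0] + D ![1,0] := by
  simp only [marg]
  rw [sum_a (fun a => if a ((1:Fin 2),(0:Fin 2)).1 = ((1:Fin 2),(0:Fin 2)).2 then D a else 0)]
  norm_num

lemma marg11 (D : (Fin 2 → Fin 2) → ℝ) : marg D (1, 1) = D ![0,1] + D ![1,1] := by
  simp only [marg]
  rw [sum_a (fun a => if a ((1:Fin 2),(1:Fin 2)).1 = ((1:Fin 2),(1:Fin 2)).2 then D a else 0)]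
  norm_num

noncomputable def DYw (θ : ℝ) : (Fin 2 → Fin 2) → ℝ :=
  fun a => ![![0, 1-θ], ![θ, 0]] (a 0) (a 1)

noncomputable def DNw (θ : ℝ) : (Fin 2 → Fin 2) → ℝ :=
  fun a => ![![1-θ, 0], ![2*θ-1, 1-θ]] (a 0) (a 1)

lemma marg_eq (θ : ℝ) : marg (DYw θ) = marg (DNw θ) := by
  funext x
  obtain ⟨i, σ⟩ := x
  rcases fin2cases i with hi|hi <;> rcases fin2cases σ with hσ|hσ <;> subst hi <;> subst hσ <;>
    simp only [marg00, marg01, marg10, marg11] <;> norm_num [DYw, DNw] <;> ring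

lemma DYw_mem (γ θ : ℝ) (h1 : γ ≤ θ) (h3 : θ ≤ 1) (h0 : 0 ≤ θ) : DYw θ ∈ SYd γ := by
  refine ⟨⟨?_, ?_⟩, ?_⟩
  · intro a
    rcases fin2cases (a 0) with h|h <;> rcases fin2cases (a 1) with h'|h' <;>
      simp [DYw, h, h'] <;> linarith
  · rw [sum_a (DYw θ)]; norm_num [DYw]
  · rw [val_yes]; norm_num [DYw]; exact h1

lemma L1 (θ p q : ℝ) (hθ1 : 1/2 ≤ θ) (hθ2 : θ ≤ 2/3)
    (hp0 : 0 ≤ p) (hp1 : p ≤ 1) (hq0 : 0 ≤ q) (hq1 : q ≤ 1) :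
    (1-θ)*(p*(1-p)) + (2*θ-1)*(q*(1-p)) + (1-θ)*(q*(1-q)) ≤ (1-θ)^2/(3-4*θ) := by
  rw [le_div_iff₀ (by linarith)]
  have ht : (0:ℝ) < 2*(3-4*θ) := by linarith
  have key : ((1-θ)*(p*(1-p)) + (2*θ-1)*(q*(1-p)) + (1-θ)*(q*(1-q))) * (3-4*θ) * (2*(3-4*θ))
      ≤ (1-θ)^2 * (2*(3-4*θ)) := by
    nlinarith [mul_nonneg (show (0:ℝ) ≤ 3-4*θ by linarith)
        (sq_nonneg ((3-4*θ)*p - (2-3*θ))),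
      mul_nonneg (show (0:ℝ) ≤ 3-4*θ by linarith)
        (sq_nonneg ((3-4*θ)*q - (1-θ))),
      mul_nonneg (show (0:ℝ) ≤ 2*θ-1 by linarith)
        (sq_nonneg ((3-4*θ)*p - (2-3*θ) + ((3-4*θ)*q - (1-θ))))]
  exact le_of_mul_le_mul_right key ht

lemma L2 (θ p q : ℝ) (hθ1 : 2/3 ≤ θ) (hθ2 : θ ≤ 1)
    (hp0 : 0 ≤ p) (hp1 : p ≤ 1) (hq0 : 0 ≤ q) (hq1 : q ≤ 1) :
    (1-θ)*(p*(1-p)) + (2*θ-1)*(q*(1-p)) + (1-θ)*(q*(1-q)) ≤ 2*θ-1 := by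
  nlinarith [mul_nonneg (show (0:ℝ) ≤ 1-θ by linarith) (sq_nonneg (2*p+q-1)),
    mul_nonneg (show (0:ℝ) ≤ 1-θ by linarith) (sq_nonneg (q-1)),
    mul_nonneg (show (0:ℝ) ≤ 3*θ-2 by linarith)
      (add_nonneg (show (0:ℝ) ≤ 1-q by linarith) (mul_nonneg hp0 hq0))]

lemma DNw_mem (β θ : ℝ) (hθ1 : 1/2 ≤ θ) (hθ2 : θ ≤ 1)
    (hβ : (θ ≤ 2/3 ∧ (1-θ)^2/(3-4*θ) ≤ β) ∨ (2/3 ≤ θ ∧ 2*θ-1 ≤ β)) :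
    DNw θ ∈ SNd β := by
  refine ⟨⟨?_, ?_⟩, ?_⟩
  · intro a
    rcases fin2cases (a 0) with h|h <;> rcases fin2cases (a 1) with h'|h' <;>
      simp [DNw, h, h'] <;> linarith
  · rw [sum_a (DNw θ)]; norm_num [DNw]; ring
  · intro P hP
    have h0 : P 0 0 + P 0 1 = 1 := by have := (hP 0).2; rwa [Fin.sum_univ_two] at this
    have h1 : P 1 0 + P 1 1 = 1 := by have := (hP 1).2; rwa [Fin.sum_univ_two] at this
    rw [val_no (DNw θ) P h0 h1]
    have e00 : DNw θ ![0,0] = 1-θ := by norm_num [DNw]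
    have e01 : DNw θ ![0,1] = 0 := by norm_num [DNw]
    have e10 : DNw θ ![1,0] = 2*θ-1 := by norm_num [DNw]
    have e11 : DNw θ ![1,1] = 1-θ := by norm_num [DNw]
    rw [e00, e01, e10, e11]
    have hP00 : P 0 0 = 1 - P 0 1 := by linarith
    have hP10 : P 1 0 = 1 - P 1 1 := by linarith
    rw [hP00, hP10]
    have hp0 : 0 ≤ P 0 1 := (hP 0).1 1
    have hp1 : P 0 1 ≤ 1 := by have := (hP 0).1 0; linarith
    have hq0 : 0 ≤ P 1 1 := (hP 1).1 1
    have hq1 : P 1 1 ≤ 1 := by have := (hP 1).1 0; linarith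
    rcases hβ with ⟨hθ3, hβ⟩ | ⟨hθ3, hβ⟩
    · calc (1-θ) * (P 0 1 * (1 - P 0 1)) + 0 * (P 0 1 * (1 - P 1 1))
            + (2*θ-1) * (P 1 1 * (1 - P 0 1)) + (1-θ) * (P 1 1 * (1 - P 1 1))
          = (1-θ)*(P 0 1*(1-P 0 1)) + (2*θ-1)*(P 1 1*(1-P 0 1))
            + (1-θ)*(P 1 1*(1-P 1 1)) := by ring
        _ ≤ (1-θ)^2/(3-4*θ) := L1 θ (P 0 1) (P 1 1) hθ1 hθ3 hp0 hp1 hq0 hq1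
        _ ≤ β := hβ
    · calc (1-θ) * (P 0 1 * (1 - P 0 1)) + 0 * (P 0 1 * (1 - P 1 1))
            + (2*θ-1) * (P 1 1 * (1 - P 0 1)) + (1-θ) * (P 1 1 * (1 - P 1 1))
          = (1-θ)*(P 0 1*(1-P 0 1)) + (2*θ-1)*(P 1 1*(1-P 0 1))
            + (1-θ)*(P 1 1*(1-P 1 1)) := by ring
        _ ≤ 2*θ-1 := L2 θ (P 0 1) (P 1 1) hθ3 hθ2 hp0 hp1 hq0 hq1
        _ ≤ β := hβ


set_option maxHeartbeats 1000000

/-- Example 1 of the paper: a complete description of the pairs `(γ,β)` for which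
`K_γ^Y ∩ K_β^N ≠ ∅` for Max-DICUT. -/
theorem dicut_intersection_characterization (γ β : ℝ)
    (hγ : γ ∈ Set.Icc (0 : ℝ) 1) (hβ : β ∈ Set.Icc (0 : ℝ) 1) :
    (KYd γ ∩ KNd β).Nonempty ↔
      (γ ≤ 1 / 2 ∧ 1 / 4 ≤ β) ∨
      (1 / 2 ≤ γ ∧ γ ≤ 2 / 3 ∧ (1 - γ) ^ 2 / (3 - 4 * γ) ≤ β) ∨
      (2 / 3 ≤ γ ∧ γ ≤ 1 ∧ 2 * γ - 1 ≤ β) := by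
  constructor
  · rintro ⟨μ, ⟨DY, ⟨⟨hYpos, hYsum⟩, hYγ⟩, hYm⟩, DN, ⟨⟨hNpos, hNsum⟩, hN⟩, hNm⟩
    rw [val_yes] at hYγ
    rw [sum_a DY] at hYsum
    rw [sum_a DN] at hNsum
    have hmm := hYm.trans hNm.symm
    have hm1 := congrFun hmm ((0:Fin 2), (1:Fin 2))
    rw [marg01, marg01] at hm1
    have hm2 := congrFun hmm ((1:Fin 2), (1:Fin 2))
    rw [marg11, marg11] at hm2
    have hY00 := hYpos ![0,0]; have hY01 := hYpos ![0,1]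
    have hY10 := hYpos ![1,0]; have hY11 := hYpos ![1,1]
    have hN00 := hNpos ![0,0]; have hN01 := hNpos ![0,1]
    have hN10 := hNpos ![1,0]; have hN11 := hNpos ![1,1]
    rcases le_or_gt γ (1/2) with hg | hg
    · left
      refine ⟨hg, ?_⟩
      have hP : ∀ σ : Fin 2, IsDist ((fun _ => ![(1:ℝ)/2, 1/2]) σ) := by
        intro σ
        constructor
        · intro x; rcases fin2cases x with h|h <;> simp [h] <;> norm_num
        · rw [Fin.sum_univ_two]; norm_num
      have hq := hN (fun _ => ![(1:ℝ)/2, 1/2]) hP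
      rw [val_no DN _ (by norm_num) (by norm_num)] at hq
      norm_num at hq
      linarith
    · rcases le_or_gt γ (2/3) with hg2 | hg2
      · right; left
        refine ⟨hg.le, hg2, ?_⟩
        have ht : (0:ℝ) < 3-4*γ := by linarith
        set p : ℝ := (2-3*γ)/(3-4*γ) with hp
        set q : ℝ := (1-γ)/(3-4*γ) with hq
        have hp0 : 0 ≤ p := div_nonneg (by linarith) (by linarith)
        have hp1 : p ≤ 1 := by rw [hp, div_le_one ht]; linarith
        have hq0 : 0 ≤ q := div_nonneg (by linarith) (by linarith)
        have hq1 : q ≤ 1 := by rw [hq, div_le_one ht]; linarith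
        have hP : ∀ σ : Fin 2, IsDist ((![![1-p, p], ![1-q, q]] : Fin 2 → Fin 2 → ℝ) σ) := by
          intro σ
          rcases fin2cases σ with h|h <;> subst h <;> constructor
          · intro x; rcases fin2cases x with h'|h' <;> subst h' <;> simp <;> linarith
          · rw [Fin.sum_univ_two]; simp
          · intro x; rcases fin2cases x with h'|h' <;> subst h' <;> simp <;> linarith
          · rw [Fin.sum_univ_two]; simp
        have hval := hN (![![1-p, p], ![1-q, q]]) hP
        rw [val_no DN _ (by norm_num) (by norm_num)] at hval
        simp only [Matrix.cons_val_zero, Matrix.cons_val_one, Matrix.head_cons] at hval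
        -- hval : DN ![0,0]*(p*(1-p)) + DN ![0,1]*(p*(1-q)) + DN ![1,0]*(q*(1-p)) + DN ![1,1]*(q*(1-q)) ≤ β
        rw [div_le_iff₀ ht]
        have he00 : DN ![0,0] = 1 - DN ![0,1] - DN ![1,0] - DN ![1,1] := by linarith
        have hA10 : γ ≤ DN ![1,0] + DN ![1,1] := by linarith
        have hA01 : DN ![0,1] + DN ![1,1] ≤ 1 - γ := by linarith
        have hid : (DN ![0,0]*(p*(1-p)) + DN ![0,1]*(p*(1-q)) + DN ![1,0]*(q*(1-p))
              + DN ![1,1]*(q*(1-q))) * (3-4*γ)^2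
            = (2-3*γ)*(1-γ)*(DN ![0,0]) + (2-3*γ)^2*(DN ![0,1]) + (1-γ)^2*(DN ![1,0])
              + (1-γ)*(2-3*γ)*(DN ![1,1]) := by
          have e1 : p * (3-4*γ) = 2-3*γ := by rw [hp]; exact div_mul_cancel₀ _ ht.ne'
          have e2 : q * (3-4*γ) = 1-γ := by rw [hq]; exact div_mul_cancel₀ _ ht.ne'
          linear_combination (DN ![0,0] * ((3-4*γ) - (p*(3-4*γ) + (2-3*γ))) + DN ![0,1] * ((3-4*γ) - q*(3-4*γ))
            - DN ![1,0] * (1-γ)) * e1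
            + (DN ![1,0] * ((3-4*γ) - p*(3-4*γ)) - DN ![0,1] * (2-3*γ)
            + DN ![1,1] * ((3-4*γ) - q*(3-4*γ) - (1-γ))) * e2
        have hF : (1-γ)^2*(3-4*γ) ≤ (DN ![0,0]*(p*(1-p)) + DN ![0,1]*(p*(1-q))
            + DN ![1,0]*(q*(1-p)) + DN ![1,1]*(q*(1-q))) * (3-4*γ)^2 := by
          rw [hid, he00]
          nlinarith [mul_nonneg (sq_nonneg (2*γ-1)) hN01,
            mul_nonneg (mul_nonneg (show (0:ℝ) ≤ 1-γ by linarith)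
              (show (0:ℝ) ≤ 2*γ-1 by linarith))
              (show (0:ℝ) ≤ DN ![1,0] + DN ![1,1] - γ by linarith),
            mul_nonneg (mul_nonneg (show (0:ℝ) ≤ 1-γ by linarith)
              (show (0:ℝ) ≤ 2*γ-1 by linarith))
              (show (0:ℝ) ≤ 1 - γ - DN ![0,1] - DN ![1,1] by linarith)]
        have hB : (DN ![0,0]*(p*(1-p)) + DN ![0,1]*(p*(1-q)) + DN ![1,0]*(q*(1-p))
              + DN ![1,1]*(q*(1-q))) * (3-4*γ)^2 ≤ β * (3-4*γ)^2 :=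
          mul_le_mul_of_nonneg_right hval (sq_nonneg _)
        have hC : (1-γ)^2*(3-4*γ) ≤ (β*(3-4*γ))*(3-4*γ) := by nlinarith [hF, hB]
        exact le_of_mul_le_mul_right hC ht
      · right; right
        refine ⟨hg2.le, hγ.2, ?_⟩
        have hP : ∀ σ : Fin 2, IsDist ((![![(1:ℝ),0], ![0,1]] : Fin 2 → Fin 2 → ℝ) σ) := by
          intro σ
          rcases fin2cases σ with h|h <;> subst h <;> constructor <;>
            first
            | (intro x; rcases fin2cases x with h'|h' <;> subst h' <;> norm_num)
            | (rw [Fin.sum_univ_two]; norm_num)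
        have hv := hN (![![(1:ℝ),0], ![0,1]]) hP
        rw [val_no DN _ (by norm_num) (by norm_num)] at hv
        norm_num at hv
        linarith
  · rintro (⟨h1, h2⟩ | ⟨h1, h2, h3⟩ | ⟨h1, h2, h3⟩)
    · exact ⟨marg (DYw (1/2)),
        ⟨DYw (1/2), DYw_mem γ (1/2) h1 (by norm_num) (by norm_num), rfl⟩,
        ⟨DNw (1/2), DNw_mem β (1/2) le_rfl (by norm_num)
          (Or.inl ⟨by norm_num, by norm_num; linarith⟩), (marg_eq (1/2)).symm⟩⟩
    · exact ⟨marg (DYw γ),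
        ⟨DYw γ, DYw_mem γ γ le_rfl (by linarith) hγ.1, rfl⟩,
        ⟨DNw γ, DNw_mem β γ h1 (by linarith) (Or.inl ⟨h2, h3⟩), (marg_eq γ).symm⟩⟩
    · exact ⟨marg (DYw γ),
        ⟨DYw γ, DYw_mem γ γ le_rfl h2 hγ.1, rfl⟩,
        ⟨DNw γ, DNw_mem β γ (by linarith) h2 (Or.inr ⟨h1, h3⟩), (marg_eq γ).symm⟩⟩
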